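/- Let [σ₁|τ₁] ∈ B_p and [σ₂|τ₂] ∈ B_q (p,q ≥ 1). If a basis element [σ₃|τ₃] has nonzero coefficient in the product [σ₁|τ₁] ⋆ [σ₂|τ₂] ∈ F_{p+q}, then max τ₃ = max(τ₁ ∪ τ₂) and |τ₃| ≥ |τ₁| + |τ₂| − 1. -/

import Mathlib

open Classical MvPolynomial Finsupp TensorProduct

set_option maxHeartbeats 1600000

noncomputable section

namespace EdgeRes

/-- A "cell" `(σ, τ)`: a pair of finite sets of vertices, representing the symbol `[σ|τ]`. -/
abbrev Cell (n : ℕ) := Finset (Fin n) × Finset (Fin n)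

/-- The cointerval graph of the intervals `[a i, b i]`: distinct vertices are adjacent
iff the corresponding closed intervals are disjoint. -/
def cigraph (n : ℕ) (a b : Fin n → ℝ) : SimpleGraph (Fin n) where
  Adj i j := i ≠ j ∧ Disjoint (Set.Icc (a i) (b i)) (Set.Icc (a j) (b j))
  symm := by refine ⟨?_⟩; intro i j h; exact ⟨h.1.symm, h.2.symm⟩
  loopless := by refine ⟨?_⟩; intro i h; exact h.1 rfl

variable {n : ℕ}

/-- The homological degree of a cell: `|σ| + |τ| - 1`. -/
def cellDeg (e : Cell n) : ℕ := e.1.card + e.2.card - 1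

/-- `e = (σ, τ)` is a basis cell: either the degree-0 cell `(∅, ∅)` (representing `1 ∈ B₀`),
or `σ, τ` are disjoint and nonempty, `max σ < min τ`, and every `i ∈ σ` is adjacent
to `min τ` in `G`. -/
def IsBasisCell (G : SimpleGraph (Fin n)) (e : Cell n) : Prop :=
  e = (∅, ∅) ∨
  (e.1.Nonempty ∧ e.2.Nonempty ∧ Disjoint e.1 e.2 ∧
   (∀ i ∈ e.1, ∀ j ∈ e.2, i < j) ∧
   (∀ i ∈ e.1, ∀ j ∈ e.2, (∀ j' ∈ e.2, j ≤ j') → G.Adj i j))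

/-- `e ∈ B_d`. -/
def InB (G : SimpleGraph (Fin n)) (d : ℕ) (e : Cell n) : Prop :=
  IsBasisCell G e ∧ cellDeg e = d

/-- The underlying module of the resolution: the free `S`-module on all cells (the
resolution `F` is the submodule family spanned by the basis cells of each degree). -/
abbrev Ftot (n : ℕ) (k : Type) [Field k] := Cell n →₀ MvPolynomial (Fin n) k

variable (G : SimpleGraph (Fin n)) (k : Type) [Field k]

/-- The basis vector corresponding to a cell, where symbols that are not genuine
basis elements are interpreted as `0`. -/
def sym (e : Cell n) : Ftot n k :=
  if IsBasisCell G e then Finsupp.single e 1 else 0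

/-- The differential on a basis cell: `d[{i}|{j}] = x_i x_j`, and for `|σ|+|τ| ≥ 3`,
`d[σ|τ] = Σ_{i∈σ} (−1)^{|τ|+|{j∈σ : j>i}|} x_i [σ∖i|τ] + Σ_{i∈τ} (−1)^{|{j∈τ : j>i}|} x_i [σ|τ∖i]`. -/
def diffCell (e : Cell n) : Ftot n k :=
  if IsBasisCell G e then
    if e.1.card + e.2.card = 2 then
      (∏ i ∈ e.1 ∪ e.2, (X i : MvPolynomial (Fin n) k)) • sym G k ((∅, ∅) : Cell n)
    else if 3 ≤ e.1.card + e.2.card then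
      (∑ i ∈ e.1,
        (((-1 : MvPolynomial (Fin n) k) ^ (e.2.card + (e.1.filter fun j => i < j).card)) * X i) •
          sym G k (e.1.erase i, e.2))
      + (∑ i ∈ e.2,
        (((-1 : MvPolynomial (Fin n) k) ^ ((e.2.filter fun j => i < j).card)) * X i) •
          sym G k (e.1, e.2.erase i))
    else 0
  else 0

/-- The differential, as an `S`-linear endomorphism of the total module (it is zero in
degree `0` and on non-basis cells). -/
def Dmap : Ftot n k →ₗ[MvPolynomial (Fin n) k] Ftot n k :=
  Finsupp.lsum ℕ fun e => LinearMap.smulRight LinearMap.id (diffCell G k e)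

/-- The submodule `F_d`: the span of the basis cells in `B_d`.  (`F` is the direct sum of
these, and `F_0 = S·[∅|∅] ≅ S`.) -/
def Fsub (d : ℕ) : Submodule (MvPolynomial (Fin n) k) (Ftot n k) :=
  Submodule.span _ {f : Ftot n k | ∃ e : Cell n, InB G d e ∧ f = Finsupp.single e 1}

/-- The edge ideal `I_G`, generated by the `x_i x_j` for edges `ij` of `G`. -/
def edgeIdeal : Ideal (MvPolynomial (Fin n) k) :=
  Ideal.span {m | ∃ i j : Fin n, G.Adj i j ∧ m = X i * X j}

/-- The irrelevant maximal ideal `(x_1, …, x_n)`. -/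
def irrIdeal (n : ℕ) (k : Type) [Field k] : Ideal (MvPolynomial (Fin n) k) :=
  Ideal.span (Set.range fun i : Fin n => (X i : MvPolynomial (Fin n) k))

/-- The set of pairs `(i, j)` with `i < j`, `ij ∈ E(G)`, and `x_i x_j ∣ x^α`; i.e. the
elements `[{i}|{j}]` of `B₁` whose monomial divides `x^α`. -/
def DvdSet (α : Fin n →₀ ℕ) : Finset (Fin n × Fin n) :=
  Finset.univ.filter fun p => p.1 < p.2 ∧ G.Adj p.1 p.2 ∧ 1 ≤ α p.1 ∧ 1 ≤ α p.2

/-- `c` on a monomial `x^α ∈ F_0 = S`: zero if `x^α ∉ I_G`; otherwise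
`(x^α/(x_i x_j))·[{i}|{j}]` for the `≺`-minimal `[{i}|{j}] ∈ B₁` with `x_i x_j ∣ x^α`
(i.e. `j` is largest possible and then `i` smallest possible). -/
def cZero (α : Fin n →₀ ℕ) : Ftot n k :=
  if h : (DvdSet G α).Nonempty then
    let t := ((DvdSet G α).image Prod.snd).max' (h.image _)
    if h2 : ((((DvdSet G α).filter fun p => p.2 = t)).image Prod.fst).Nonempty then
      let s := ((((DvdSet G α).filter fun p => p.2 = t)).image Prod.fst).min' h2
      (monomial (α - Finsupp.single s 1 - Finsupp.single t 1) (1 : k)) • sym G k ({s}, {t})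
    else 0
  else 0

/-- `C₁ = {i ∈ supp α : i > max τ}`. -/
def C1set (τ : Finset (Fin n)) (α : Fin n →₀ ℕ) : Finset (Fin n) :=
  α.support.filter fun i => ∀ j ∈ τ, j < i

/-- `C₂ = {i ∈ supp α : i < min σ, {i, min τ} ∈ E(G)}`. -/
def C2set (σ τ : Finset (Fin n)) (α : Fin n →₀ ℕ) : Finset (Fin n) :=
  α.support.filter fun i =>
    (∀ s ∈ σ, i < s) ∧ ∀ j ∈ τ, (∀ j' ∈ τ, j ≤ j') → G.Adj i j

/-- `C₃ = {i ∈ supp α : i < min σ, i < max supp α, {i, max supp α} ∈ E(G)}`. -/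
def C3set (σ : Finset (Fin n)) (α : Fin n →₀ ℕ) : Finset (Fin n) :=
  α.support.filter fun i =>
    (∀ s ∈ σ, i < s) ∧ ∀ m ∈ α.support, (∀ m' ∈ α.support, m' ≤ m) → (i < m ∧ G.Adj i m)

/-- The value of the contracting homotopy `c` on the `k`-basis vector `x^α·e`. -/
def cMono (e : Cell n) (α : Fin n →₀ ℕ) : Ftot n k :=
  if IsBasisCell G e then
    if hτ : e.2.Nonempty then
      if e.2.card = 1 then
        -- `τ = {t}`
        let t := e.2.max' hτ
        if h1 : (C1set e.2 α).Nonempty then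
          let m1 := (C1set e.2 α).max' h1
          (monomial (α - Finsupp.single m1 1) (1 : k)) • sym G k (e.1, insert m1 e.2)
          + (if h3 : (C3set G e.1 α).Nonempty then
              let m3 := (C3set G e.1 α).min' h3
              ((-1 : MvPolynomial (Fin n) k) ^ (e.1.card + 1)) •
                ((monomial (α + Finsupp.single t 1 - Finsupp.single m1 1 - Finsupp.single m3 1)
                    (1 : k)) • sym G k (insert m3 e.1, ({m1} : Finset (Fin n))))
            else 0)
        else
          if h2 : (C2set G e.1 e.2 α).Nonempty then
            let m2 := (C2set G e.1 e.2 α).min' h2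
            ((-1 : MvPolynomial (Fin n) k) ^ (e.1.card + 1)) •
              ((monomial (α - Finsupp.single m2 1) (1 : k)) • sym G k (insert m2 e.1, e.2))
          else 0
      else
        -- `|τ| ≥ 2`
        if h1 : (C1set e.2 α).Nonempty then
          let m1 := (C1set e.2 α).max' h1
          (monomial (α - Finsupp.single m1 1) (1 : k)) • sym G k (e.1, insert m1 e.2)
        else 0
    else cZero G k α  -- the degree-0 basis cell `(∅, ∅)`
  else 0

/-- The `k`-basis of the total module, indexed by pairs (cell, monomial exponent). -/
def FBasis (n : ℕ) (k : Type) [Field k] :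
    Module.Basis ((_ : Cell n) × (Fin n →₀ ℕ)) k (Ftot n k) :=
  Finsupp.basis fun _ => MvPolynomial.basisMonomials (Fin n) k

/-- The contracting homotopy `c`, as a `k`-linear endomorphism of the total module. -/
def Cmap : Ftot n k →ₗ[k] Ftot n k :=
  (FBasis n k).constr ℕ fun p => cMono G k p.1 p.2

/-- The `S`-bilinear extension of a map defined on pairs of cells. -/
def biext (b : Cell n → Cell n → Ftot n k) (f g : Ftot n k) : Ftot n k :=
  ∑ e₁ ∈ f.support, ∑ e₂ ∈ g.support, (f e₁ * g e₂) • b e₁ e₂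

/-- The product of two basis cells, defined recursively (with fuel, which suffices as each
recursive step lowers the total degree): `1 ⋆ 1 = 1`, and for `p + q ≥ 1`,
`e₁ ⋆ e₂ = c((d e₁) ⋆ e₂) + (−1)^p c(e₁ ⋆ (d e₂))`. -/
def bstar : ℕ → Cell n → Cell n → Ftot n k
  | 0, _, _ => 0
  | N + 1, e₁, e₂ =>
    if cellDeg e₁ + cellDeg e₂ = 0 then Finsupp.single ((∅, ∅) : Cell n) 1
    else
      Cmap G k (biext k (fun a b => bstar N a b) (Dmap G k (Finsupp.single e₁ 1)) (Finsupp.single e₂ 1))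
      + ((-1 : MvPolynomial (Fin n) k) ^ cellDeg e₁) •
          Cmap G k (biext k (fun a b => bstar N a b) (Finsupp.single e₁ 1) (Dmap G k (Finsupp.single e₂ 1)))

/-- The product `⋆` on the resolution, extended `S`-bilinearly from basis cells. -/
def pstar (f g : Ftot n k) : Ftot n k := biext k (bstar G k (4 * n + 4)) f g

/-- The map `∂` on a basis cell: `∂[{i}|{j}] = x_i x_j`, and for `|σ|+|τ| ≥ 3`,
`∂[σ|τ] = x_{max τ}[σ|τ∖max τ] − (−1)^{|τ|+|σ|} x_{min σ}[σ∖min σ|τ]`. -/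
def partialCell (e : Cell n) : Ftot n k :=
  if IsBasisCell G e then
    if e.1.card + e.2.card = 2 then
      (∏ i ∈ e.1 ∪ e.2, (X i : MvPolynomial (Fin n) k)) • sym G k ((∅, ∅) : Cell n)
    else if 3 ≤ e.1.card + e.2.card then
      if h1 : e.1.Nonempty then
        if h2 : e.2.Nonempty then
          (X (e.2.max' h2) : MvPolynomial (Fin n) k) • sym G k (e.1, e.2.erase (e.2.max' h2))
          - ((-1 : MvPolynomial (Fin n) k) ^ (e.2.card + e.1.card)) •
              ((X (e.1.min' h1) : MvPolynomial (Fin n) k) •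
                sym G k (e.1.erase (e.1.min' h1), e.2))
        else 0
      else 0
    else 0
  else 0

/-- The map `∂`, as an `S`-linear endomorphism of the total module. -/
def Pmap : Ftot n k →ₗ[MvPolynomial (Fin n) k] Ftot n k :=
  Finsupp.lsum ℕ fun e => LinearMap.smulRight LinearMap.id (partialCell G k e)

/-- The `k`-linear projection `π` of `S` fixing each monomial not in `I_G` and
annihilating each monomial in `I_G`. -/
def piMap : MvPolynomial (Fin n) k →ₗ[k] MvPolynomial (Fin n) k :=
  (MvPolynomial.basisMonomials (Fin n) k).constr ℕ fun α =>
    if monomial α (1 : k) ∈ edgeIdeal G k then 0 else monomial α (1 : k)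

/-- The `ℕⁿ`-multidegree of the basis vector `x^α [σ|τ]`: `α + Σ_{i ∈ σ∪τ} eᵢ`. -/
def mdeg (e : Cell n) (α : Fin n →₀ ℕ) : Fin n →₀ ℕ :=
  α + ∑ i ∈ e.1 ∪ e.2, Finsupp.single i 1

/-- The `μ`-homogeneous component of the resolution (as a `k`-subspace). -/
def Hsub (μ : Fin n →₀ ℕ) : Submodule k (Ftot n k) :=
  Submodule.span k {f : Ftot n k |
    ∃ (e : Cell n) (α : Fin n →₀ ℕ), IsBasisCell G e ∧ mdeg e α = μ ∧
      f = Finsupp.single e (monomial α (1 : k))}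

-- Stage 1: basic helpers
section Helpers0

variable {n : ℕ} {k : Type} [Field k]

lemma coeff_neg_one_pow {m : ℕ} {P : MvPolynomial (Fin n) k} {α : Fin n →₀ ℕ}
    (h : MvPolynomial.coeff α ((-1 : MvPolynomial (Fin n) k) ^ m * P) ≠ 0) :
    MvPolynomial.coeff α P ≠ 0 := by
  rcases Nat.even_or_odd m with he | ho
  · rwa [he.neg_one_pow, one_mul] at h
  · rw [ho.neg_one_pow, neg_mul, one_mul, MvPolynomial.coeff_neg, neg_ne_zero] at h
    exact h

lemma monomial_coeff_ne {β α₃ : Fin n →₀ ℕ}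
    (h : MvPolynomial.coeff α₃ (MvPolynomial.monomial β (1 : k)) ≠ 0) : α₃ = β := by
  rw [MvPolynomial.coeff_monomial] at h
  split_ifs at h with hc
  · exact hc.symm
  · simp at h

lemma coeff_X_ne {i : Fin n} {β : Fin n →₀ ℕ}
    (h : MvPolynomial.coeff β (MvPolynomial.X i : MvPolynomial (Fin n) k) ≠ 0) :
    β = Finsupp.single i 1 := by
  rw [MvPolynomial.coeff_X'] at h
  split_ifs at h with hc
  · exact hc.symm
  · simp at h

lemma coeff_mul_ne {P Q : MvPolynomial (Fin n) k} {α : Fin n →₀ ℕ}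
    (h : MvPolynomial.coeff α (P * Q) ≠ 0) :
    ∃ β γ, β + γ = α ∧ MvPolynomial.coeff β P ≠ 0 ∧ MvPolynomial.coeff γ Q ≠ 0 := by
  rw [MvPolynomial.coeff_mul] at h
  obtain ⟨x, hx, hne⟩ := Finset.exists_ne_zero_of_sum_ne_zero h
  exact ⟨x.1, x.2, Finset.HasAntidiagonal.mem_antidiagonal.mp hx,
    left_ne_zero_of_mul hne, right_ne_zero_of_mul hne⟩

lemma add_ne' {a b : k} (h : a + b ≠ 0) : a ≠ 0 ∨ b ≠ 0 := by
  by_contra hc; push_neg at hc; rw [hc.1, hc.2, add_zero] at h; exact h rfl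

lemma prodX_eq (A : Finset (Fin n)) :
    (∏ i ∈ A, (MvPolynomial.X i : MvPolynomial (Fin n) k)) =
      MvPolynomial.monomial (∑ i ∈ A, Finsupp.single i 1) (1 : k) := by
  induction A using Finset.cons_induction with
  | empty => simp [MvPolynomial.monomial_zero']
  | cons a s ha ih =>
    rw [Finset.prod_cons, Finset.sum_cons, ih, MvPolynomial.X,
      MvPolynomial.monomial_mul, one_mul]

lemma mem_support_add_single {δ : Fin n →₀ ℕ} {u i : Fin n} :
    i ∈ (δ + Finsupp.single u 1).support ↔ i ∈ δ.support ∨ i = u := by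
  simp only [Finsupp.mem_support_iff, Finsupp.add_apply, Finsupp.single_apply]
  constructor
  · intro h
    by_cases hiu : i = u
    · exact Or.inr hiu
    · left; intro h0; rw [h0, if_neg (Ne.symm hiu)] at h; simp at h
  · rintro (h | rfl)
    · intro h0; exact h (by omega)
    · rw [if_pos rfl]; omega

lemma max_eq_of {s : Finset (Fin n)} {w : Fin n} (hw : w ∈ s) (h : ∀ v ∈ s, v ≤ w) :
    s.max = (w : WithBot (Fin n)) := by
  have hne : s.Nonempty := ⟨w, hw⟩
  rw [← Finset.coe_max' hne]
  congr 1
  exact le_antisymm (Finset.max'_le _ _ _ h) (Finset.le_max' _ _ hw)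

end Helpers0

section Helpers

variable {n : ℕ} (G : SimpleGraph (Fin n)) (k : Type) [Field k]

lemma smul_sym_coeff {P : MvPolynomial (Fin n) k} {c e₃ : Cell n} {α₃ : Fin n →₀ ℕ}
    (h : MvPolynomial.coeff α₃ ((P • sym G k c) e₃) ≠ 0) :
    IsBasisCell G c ∧ e₃ = c ∧ MvPolynomial.coeff α₃ P ≠ 0 := by
  unfold sym at h
  split_ifs at h with hb
  · rw [Finsupp.smul_apply, Finsupp.single_apply, smul_eq_mul] at h
    split_ifs at h with hc
    · exact ⟨hb, hc.symm, by rwa [mul_one] at h⟩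
    · simp at h
  · simp at h

lemma mem_C1 {τ : Finset (Fin n)} {α : Fin n →₀ ℕ} {i : Fin n} :
    i ∈ C1set τ α ↔ i ∈ α.support ∧ ∀ j ∈ τ, j < i := by
  simp [C1set]

lemma mem_C2 {σ τ : Finset (Fin n)} {α : Fin n →₀ ℕ} {i : Fin n} :
    i ∈ C2set G σ τ α ↔ i ∈ α.support ∧ (∀ s ∈ σ, i < s) ∧
      ∀ j ∈ τ, (∀ j' ∈ τ, j ≤ j') → G.Adj i j := by
  simp [C2set]

lemma mem_C3 {σ : Finset (Fin n)} {α : Fin n →₀ ℕ} {i : Fin n} :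
    i ∈ C3set G σ α ↔ i ∈ α.support ∧ (∀ s ∈ σ, i < s) ∧
      ∀ m ∈ α.support, (∀ m' ∈ α.support, m' ≤ m) → (i < m ∧ G.Adj i m) := by
  simp [C3set]

end Helpers
-- Stage 2: term-extraction lemmas
section Extraction

variable {n : ℕ} {G : SimpleGraph (Fin n)} {k : Type} [Field k]

lemma cZero_term {α : Fin n →₀ ℕ} {e₃ : Cell n} {α₃ : Fin n →₀ ℕ}
    (h : MvPolynomial.coeff α₃ ((cZero G k α) e₃) ≠ 0) :
    ∃ s t : Fin n, (s, t) ∈ DvdSet G α ∧ e₃ = ({s}, {t}) ∧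
      α₃ = α - Finsupp.single s 1 - Finsupp.single t 1 := by
  unfold cZero at h
  simp only [] at h
  split_ifs at h with h1 h2
  · obtain ⟨hb, he, hc⟩ := smul_sym_coeff G k h
    have hs := Finset.min'_mem _ h2
    rw [Finset.mem_image] at hs
    obtain ⟨p, hp, hps⟩ := hs
    rw [Finset.mem_filter] at hp
    refine ⟨p.1, p.2, hp.1, ?_, ?_⟩
    · rw [he, ← hps, ← hp.2]
    · have hm := monomial_coeff_ne hc
      rw [← hps, ← hp.2] at hm
      exact hm
  · simp at h
  · simp at h

lemma eq_singleton_of_card_one {s : Finset (Fin n)} (hτ : s.Nonempty) (hc : s.card = 1) :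
    s = {s.max' hτ} := by
  obtain ⟨a, ha⟩ := Finset.card_eq_one.mp hc
  refine Finset.eq_singleton_iff_unique_mem.mpr ⟨Finset.max'_mem _ _, fun x hx => ?_⟩
  have h1 : x ∈ ({a} : Finset (Fin n)) := by rw [← ha]; exact hx
  have h2 : s.max' hτ ∈ ({a} : Finset (Fin n)) := by rw [← ha]; exact Finset.max'_mem s hτ
  rw [Finset.mem_singleton] at h1 h2
  rw [h1]; exact h2.symm

lemma cMono_term {e : Cell n} {α : Fin n →₀ ℕ} {e₃ : Cell n} {α₃ : Fin n →₀ ℕ}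
    (hτ : e.2.Nonempty)
    (h : MvPolynomial.coeff α₃ ((cMono G k e α) e₃) ≠ 0) :
    IsBasisCell G e ∧ IsBasisCell G e₃ ∧
    ((∃ m1, m1 ∈ C1set e.2 α ∧ (∀ x ∈ C1set e.2 α, x ≤ m1) ∧
        e₃ = (e.1, insert m1 e.2) ∧ α₃ = α - Finsupp.single m1 1) ∨
     (∃ t m1 m3, e.2 = {t} ∧ m1 ∈ C1set e.2 α ∧ (∀ x ∈ C1set e.2 α, x ≤ m1) ∧
        m3 ∈ C3set G e.1 α ∧ (∀ x ∈ C3set G e.1 α, m3 ≤ x) ∧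
        e₃ = (insert m3 e.1, {m1}) ∧
        α₃ = α + Finsupp.single t 1 - Finsupp.single m1 1 - Finsupp.single m3 1) ∨
     (∃ t m2, e.2 = {t} ∧ C1set e.2 α = ∅ ∧ m2 ∈ C2set G e.1 e.2 α ∧
        (∀ x ∈ C2set G e.1 e.2 α, m2 ≤ x) ∧
        e₃ = (insert m2 e.1, e.2) ∧ α₃ = α - Finsupp.single m2 1)) := by
  unfold cMono at h
  by_cases hb : IsBasisCell G e
  swap
  · rw [if_neg hb] at h; simp at h
  rw [if_pos hb, dif_pos hτ] at h
  simp only [] at h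
  refine ⟨hb, ?_⟩
  by_cases hc : e.2.card = 1
  · rw [if_pos hc] at h
    by_cases h1 : (C1set e.2 α).Nonempty
    · rw [dif_pos h1] at h
      rw [Finsupp.add_apply, MvPolynomial.coeff_add] at h
      rcases add_ne' h with h' | h'
      · obtain ⟨hb3, he, hcf⟩ := smul_sym_coeff G k h'
        refine ⟨by rw [he]; exact hb3, Or.inl ⟨_, Finset.max'_mem _ h1,
          fun x hx => Finset.le_max' _ _ hx, he, monomial_coeff_ne hcf⟩⟩
      · by_cases h3 : (C3set G e.1 α).Nonempty
        · rw [dif_pos h3, smul_smul] at h'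
          obtain ⟨hb3, he, hcf⟩ := smul_sym_coeff G k h'
          refine ⟨by rw [he]; exact hb3, Or.inr (Or.inl ⟨_, _, _,
            eq_singleton_of_card_one hτ hc,
            Finset.max'_mem _ h1, fun x hx => Finset.le_max' _ _ hx, Finset.min'_mem _ h3,
            fun x hx => Finset.min'_le _ _ hx, he,
            monomial_coeff_ne (coeff_neg_one_pow hcf)⟩)⟩
        · rw [dif_neg h3] at h'; simp at h'
    · rw [dif_neg h1] at h
      by_cases h2 : (C2set G e.1 e.2 α).Nonempty
      · rw [dif_pos h2, smul_smul] at h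
        obtain ⟨hb3, he, hcf⟩ := smul_sym_coeff G k h
        refine ⟨by rw [he]; exact hb3, Or.inr (Or.inr ⟨_, _,
          eq_singleton_of_card_one hτ hc,
          Finset.not_nonempty_iff_eq_empty.mp h1, Finset.min'_mem _ h2,
          fun x hx => Finset.min'_le _ _ hx, he,
          monomial_coeff_ne (coeff_neg_one_pow hcf)⟩)⟩
      · rw [dif_neg h2] at h; simp at h
  · rw [if_neg hc] at h
    by_cases h1 : (C1set e.2 α).Nonempty
    · rw [dif_pos h1] at h
      obtain ⟨hb3, he, hcf⟩ := smul_sym_coeff G k h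
      refine ⟨by rw [he]; exact hb3, Or.inl ⟨_, Finset.max'_mem _ h1,
        fun x hx => Finset.le_max' _ _ hx, he, monomial_coeff_ne hcf⟩⟩
    · rw [dif_neg h1] at h; simp at h

lemma diffCell_term {e eb : Cell n} {β : Fin n →₀ ℕ}
    (h : MvPolynomial.coeff β ((diffCell G k e) eb) ≠ 0) :
    IsBasisCell G e ∧ IsBasisCell G eb ∧
    ((e.1.card + e.2.card = 2 ∧ eb = ((∅, ∅) : Cell n) ∧
        β = ∑ i ∈ e.1 ∪ e.2, Finsupp.single i 1) ∨
     (3 ≤ e.1.card + e.2.card ∧ ∃ i, β = Finsupp.single i 1 ∧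
        ((i ∈ e.1 ∧ eb = (e.1.erase i, e.2)) ∨ (i ∈ e.2 ∧ eb = (e.1, e.2.erase i))))) := by
  unfold diffCell at h
  split_ifs at h with hb h2 h3
  · rw [prodX_eq] at h
    obtain ⟨hb3, he, hcf⟩ := smul_sym_coeff G k h
    exact ⟨hb, by rw [he]; exact hb3, Or.inl ⟨h2, he, monomial_coeff_ne hcf⟩⟩
  · rw [Finsupp.add_apply, MvPolynomial.coeff_add] at h
    refine ⟨hb, ?_⟩
    rcases add_ne' h with h' | h'
    · rw [Finsupp.finset_sum_apply] at h'
      rw [MvPolynomial.coeff_sum] at h'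
      obtain ⟨i, hi, hne⟩ := Finset.exists_ne_zero_of_sum_ne_zero h'
      obtain ⟨hb3, he, hcf⟩ := smul_sym_coeff G k hne
      exact ⟨by rw [he]; exact hb3, Or.inr ⟨h3, i,
        coeff_X_ne (coeff_neg_one_pow hcf), Or.inl ⟨hi, he⟩⟩⟩
    · rw [Finsupp.finset_sum_apply] at h'
      rw [MvPolynomial.coeff_sum] at h'
      obtain ⟨i, hi, hne⟩ := Finset.exists_ne_zero_of_sum_ne_zero h'
      obtain ⟨hb3, he, hcf⟩ := smul_sym_coeff G k hne
      exact ⟨by rw [he]; exact hb3, Or.inr ⟨h3, i,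
        coeff_X_ne (coeff_neg_one_pow hcf), Or.inr ⟨hi, he⟩⟩⟩
  · simp at h
  · simp at h

end Extraction
-- Stage 3: Cmap/biext/Dmap/bstar plumbing
section Plumbing

variable {n : ℕ} {G : SimpleGraph (Fin n)} {k : Type} [Field k]

lemma Cmap_term {f : Ftot n k} {e₃ : Cell n} {α₃ : Fin n →₀ ℕ}
    (h : MvPolynomial.coeff α₃ ((Cmap G k f) e₃) ≠ 0) :
    ∃ (e : Cell n) (α : Fin n →₀ ℕ), MvPolynomial.coeff α (f e) ≠ 0 ∧
      MvPolynomial.coeff α₃ ((cMono G k e α) e₃) ≠ 0 := by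
  unfold Cmap at h
  rw [Module.Basis.constr_apply] at h
  rw [Finsupp.sum] at h
  rw [Finsupp.finset_sum_apply] at h
  rw [MvPolynomial.coeff_sum] at h
  obtain ⟨p, hp, hne⟩ := Finset.exists_ne_zero_of_sum_ne_zero h
  rw [Finsupp.smul_apply, MvPolynomial.coeff_smul, smul_eq_mul] at hne
  refine ⟨p.1, p.2, ?_, right_ne_zero_of_mul hne⟩
  have hrepr : (FBasis n k).repr f p = MvPolynomial.coeff p.2 (f p.1) := rfl
  rw [← hrepr]
  exact left_ne_zero_of_mul hne

lemma biext_term {b : Cell n → Cell n → Ftot n k} {f g : Ftot n k} {e' : Cell n}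
    {α' : Fin n →₀ ℕ}
    (h : MvPolynomial.coeff α' ((biext k b f g) e') ≠ 0) :
    ∃ (ea eb : Cell n) (β γ δ : Fin n →₀ ℕ), β + γ + δ = α' ∧
      MvPolynomial.coeff β (f ea) ≠ 0 ∧ MvPolynomial.coeff γ (g eb) ≠ 0 ∧
      MvPolynomial.coeff δ ((b ea eb) e') ≠ 0 := by
  unfold biext at h
  rw [Finsupp.finset_sum_apply, MvPolynomial.coeff_sum] at h
  obtain ⟨ea, _, h1⟩ := Finset.exists_ne_zero_of_sum_ne_zero h
  rw [Finsupp.finset_sum_apply, MvPolynomial.coeff_sum] at h1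
  obtain ⟨eb, _, h2⟩ := Finset.exists_ne_zero_of_sum_ne_zero h1
  rw [Finsupp.smul_apply, smul_eq_mul] at h2
  obtain ⟨βγ, δ, hsum, hfg, hb⟩ := coeff_mul_ne h2
  obtain ⟨β, γ, hsum2, hf, hg⟩ := coeff_mul_ne hfg
  exact ⟨ea, eb, β, γ, δ, by rw [hsum2, hsum], hf, hg, hb⟩

lemma Dmap_single (e : Cell n) :
    Dmap G k (Finsupp.single e 1) = diffCell G k e := by
  unfold Dmap
  rw [Finsupp.lsum_single]
  simp

lemma diffCell_unit : diffCell G k ((∅, ∅) : Cell n) = 0 := by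
  unfold diffCell
  simp

lemma bstar_succ (N : ℕ) (e₁ e₂ : Cell n) (h : ¬(cellDeg e₁ + cellDeg e₂ = 0)) :
    bstar G k (N + 1) e₁ e₂ =
      Cmap G k (biext k (fun a b => bstar G k N a b)
        (Dmap G k (Finsupp.single e₁ 1)) (Finsupp.single e₂ 1))
      + ((-1 : MvPolynomial (Fin n) k) ^ cellDeg e₁) •
          Cmap G k (biext k (fun a b => bstar G k N a b)
            (Finsupp.single e₁ 1) (Dmap G k (Finsupp.single e₂ 1))) := by
  rw [bstar, if_neg h]

lemma smul_coeff_strip {p : ℕ} {F : Ftot n k} {e₃ : Cell n} {α₃ : Fin n →₀ ℕ}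
    (h : MvPolynomial.coeff α₃ ((((-1 : MvPolynomial (Fin n) k) ^ p) • F) e₃) ≠ 0) :
    MvPolynomial.coeff α₃ (F e₃) ≠ 0 := by
  rw [Finsupp.smul_apply, smul_eq_mul] at h
  exact coeff_neg_one_pow h

lemma single_coeff_ne {e eb : Cell n} {γ : Fin n →₀ ℕ}
    (h : MvPolynomial.coeff γ ((Finsupp.single e (1 : MvPolynomial (Fin n) k)) eb) ≠ 0) :
    eb = e ∧ γ = 0 := by
  rw [Finsupp.single_apply] at h
  split_ifs at h with he
  · refine ⟨he.symm, ?_⟩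
    rw [MvPolynomial.coeff_one] at h
    split_ifs at h with h0
    · exact h0.symm
    · simp at h
  · simp at h

lemma pstar_single (e₁ e₂ : Cell n) :
    pstar G k (Finsupp.single e₁ 1) (Finsupp.single e₂ 1) = bstar G k (4 * n + 4) e₁ e₂ := by
  unfold pstar biext
  rw [Finsupp.support_single_ne_zero _ (one_ne_zero), Finsupp.support_single_ne_zero _ (one_ne_zero)]
  rw [Finset.sum_singleton, Finset.sum_singleton]
  simp

end Plumbing
-- Stage 4: basis facts and cde lemmas
section CDE

variable {n : ℕ} {G : SimpleGraph (Fin n)} {k : Type} [Field k]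

lemma basis_pos {e : Cell n} (hb : IsBasisCell G e) (hne : e.2.Nonempty) :
    e.1.Nonempty ∧ (∀ i ∈ e.1, ∀ j ∈ e.2, i < j) ∧
      (∀ i ∈ e.1, ∀ j ∈ e.2, (∀ j' ∈ e.2, j ≤ j') → G.Adj i j) := by
  rcases hb with h | h
  · rw [h] at hne; exact absurd hne (by simp)
  · exact ⟨h.1, h.2.2.2.1, h.2.2.2.2⟩

lemma basis_pos' {e : Cell n} (hb : IsBasisCell G e) (hne : e.1.Nonempty) :
    e.2.Nonempty := by
  rcases hb with h | h
  · rw [h] at hne; exact absurd hne (by simp)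
  · exact h.2.1

lemma mem_Dvd {α : Fin n →₀ ℕ} {p : Fin n × Fin n} :
    p ∈ DvdSet G α ↔ p.1 < p.2 ∧ G.Adj p.1 p.2 ∧ 1 ≤ α p.1 ∧ 1 ≤ α p.2 := by
  simp [DvdSet]

lemma cMono_unit (α : Fin n →₀ ℕ) :
    cMono G k ((∅, ∅) : Cell n) α = cZero G k α := by
  unfold cMono
  have hb : IsBasisCell G ((∅, ∅) : Cell n) := Or.inl rfl
  rw [if_pos hb, dif_neg (by simp : ¬((∅, ∅) : Cell n).2.Nonempty)]

lemma supp_single_sub {u : Fin n} {i : Fin n}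
    (hi : i ∈ (Finsupp.single u 1 : Fin n →₀ ℕ).support) : i = u := by
  rw [Finsupp.support_single_ne_zero u one_ne_zero, Finset.mem_singleton] at hi
  exact hi

lemma cde_sigma {e : Cell n} (hb : IsBasisCell G e) (hτ : e.2.Nonempty) {u : Fin n}
    (hu : u ∈ e.1) {e₃ : Cell n} {α₃ : Fin n →₀ ℕ}
    (h : MvPolynomial.coeff α₃ ((cMono G k (e.1.erase u, e.2) (Finsupp.single u 1)) e₃) ≠ 0) :
    e₃ = e ∧ α₃ = 0 := by
  obtain ⟨hbe, hb3, hD⟩ := cMono_term (e := (e.1.erase u, e.2)) hτ h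
  have horder := (basis_pos hb hτ).2.1
  obtain ⟨j₀, hj₀⟩ := hτ
  have hC1 : ∀ m1, m1 ∉ C1set (e.1.erase u, e.2).2 (Finsupp.single u 1) := by
    intro m1 hm1
    rw [mem_C1] at hm1
    have := supp_single_sub hm1.1
    subst this
    exact absurd (horder m1 hu j₀ hj₀) (not_lt.mpr (le_of_lt (hm1.2 j₀ hj₀)))
  rcases hD with ⟨m1, hm1, _⟩ | ⟨t, m1, m3, _, hm1, _⟩ | ⟨t, m2, ht, _, hm2, _, he3, hα⟩
  · exact absurd hm1 (hC1 m1)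
  · exact absurd hm1 (hC1 m1)
  · rw [mem_C2] at hm2
    have := supp_single_sub hm2.1
    subst this
    constructor
    · rw [he3]
      have : insert m2 ((e.1.erase m2, e.2) : Cell n).1 = e.1 := Finset.insert_erase hu
      rw [this]
    · rw [hα, tsub_self]

lemma cde_tau {e : Cell n} (hb : IsBasisCell G e) (hτ : e.2.Nonempty) (hσ : e.1.Nonempty)
    {u : Fin n} (hu : u ∈ e.2)
    (hbe : IsBasisCell G ((e.1, e.2.erase u) : Cell n)) {e₃ : Cell n} {α₃ : Fin n →₀ ℕ}
    (h : MvPolynomial.coeff α₃ ((cMono G k (e.1, e.2.erase u) (Finsupp.single u 1)) e₃) ≠ 0) :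
    e₃ = e ∧ α₃ = 0 := by
  have hτ' : ((e.1, e.2.erase u) : Cell n).2.Nonempty := basis_pos' hbe hσ
  obtain ⟨hbe', hb3, hD⟩ := cMono_term hτ' h
  have horder := (basis_pos hb hτ).2.1
  obtain ⟨w, hw⟩ := hσ
  have hnot23 : ∀ m, m ∈ (Finsupp.single u 1 : Fin n →₀ ℕ).support →
      (∀ s ∈ (e.1, e.2.erase u).1, m < s) → False := by
    intro m hm hs
    have := supp_single_sub hm
    subst this
    exact absurd (horder w hw m hu) (not_lt.mpr (le_of_lt (hs w hw)))
  rcases hD with ⟨m1, hm1, _, he3, hα⟩ | ⟨t, m1, m3, _, _, _, hm3, _⟩ |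
    ⟨t, m2, _, _, hm2, _⟩
  · rw [mem_C1] at hm1
    have := supp_single_sub hm1.1
    subst this
    refine ⟨?_, by rw [hα, tsub_self]⟩
    rw [he3]
    have : insert m1 ((e.1, e.2.erase m1) : Cell n).2 = e.2 := Finset.insert_erase hu
    rw [this]
  · rw [mem_C3] at hm3
    exact (hnot23 m3 hm3.1 hm3.2.1).elim
  · rw [mem_C2] at hm2
    exact (hnot23 m2 hm2.1 hm2.2.1).elim

lemma cde_base {e : Cell n} (hb : IsBasisCell G e) (hc1 : e.1.card = 1) (hc2 : e.2.card = 1)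
    {e₃ : Cell n} {α₃ : Fin n →₀ ℕ}
    (h : MvPolynomial.coeff α₃
      ((cMono G k ((∅, ∅) : Cell n) (∑ i ∈ e.1 ∪ e.2, Finsupp.single i 1)) e₃) ≠ 0) :
    e₃ = e ∧ α₃ = 0 := by
  rw [cMono_unit] at h
  obtain ⟨s, hs⟩ := Finset.card_eq_one.mp hc1
  obtain ⟨t, ht⟩ := Finset.card_eq_one.mp hc2
  have hτ : e.2.Nonempty := by rw [ht]; exact ⟨t, Finset.mem_singleton_self t⟩
  have hst : s < t := (basis_pos hb hτ).2.1 s (by rw [hs]; simp) t (by rw [ht]; simp)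
  have hβ : (∑ i ∈ e.1 ∪ e.2, Finsupp.single i 1 : Fin n →₀ ℕ) =
      Finsupp.single s 1 + Finsupp.single t 1 := by
    rw [hs, ht, Finset.sum_union (Finset.disjoint_singleton.mpr hst.ne),
      Finset.sum_singleton, Finset.sum_singleton]
  rw [hβ] at h
  obtain ⟨s', t', hmem, he3, hα⟩ := cZero_term h
  rw [mem_Dvd] at hmem
  have hsupp : ∀ x : Fin n,
      1 ≤ (Finsupp.single s 1 + Finsupp.single t 1 : Fin n →₀ ℕ) x → x = s ∨ x = t := by
    intro x hx
    by_contra hcon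
    push_neg at hcon
    rw [Finsupp.add_apply, Finsupp.single_apply, Finsupp.single_apply,
      if_neg (fun hh => hcon.1 hh.symm), if_neg (fun hh => hcon.2 hh.symm)] at hx
    omega
  have hs' := hsupp s' hmem.2.2.1
  have ht' := hsupp t' hmem.2.2.2
  have hlt := hmem.1
  have hfin : s' = s ∧ t' = t := by
    rcases hs' with rfl | rfl <;> rcases ht' with rfl | rfl
    · exact absurd hlt (lt_irrefl _)
    · exact ⟨rfl, rfl⟩
    · exact absurd (hlt.trans hst) (lt_irrefl _)
    · exact absurd hlt (lt_irrefl _)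
  obtain ⟨rfl, rfl⟩ := hfin
  constructor
  · rw [he3, ← hs, ← ht]
  · rw [hα, add_tsub_cancel_left, tsub_self]

end CDE
-- Stage 5: termwise unit laws
section TermUnit

variable {n : ℕ} {G : SimpleGraph (Fin n)} {k : Type} [Field k]

lemma eq_unit_of_cellDeg_zero {e : Cell n} (hb : IsBasisCell G e) (hd : cellDeg e = 0) :
    e = ((∅, ∅) : Cell n) := by
  rcases hb with h | h
  · exact h
  · have h1 := Finset.card_pos.mpr h.1
    have h2 := Finset.card_pos.mpr h.2.1
    unfold cellDeg at hd
    omega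

lemma cellDeg_card {e : Cell n} (h1 : e.1.Nonempty) (h2 : e.2.Nonempty) :
    1 ≤ cellDeg e := by
  have h1 := Finset.card_pos.mpr h1
  have h2 := Finset.card_pos.mpr h2
  unfold cellDeg
  omega

lemma card_of_two {e : Cell n} (hb : IsBasisCell G e) (hcard : e.1.card + e.2.card = 2) :
    e.1.card = 1 ∧ e.2.card = 1 := by
  rcases hb with h | h
  · rw [h] at hcard; simp at hcard
  · have h1 := Finset.card_pos.mpr h.1
    have h2 := Finset.card_pos.mpr h.2.1
    omega

lemma biext_zero_left (b : Cell n → Cell n → Ftot n k) (g : Ftot n k) :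
    biext k b (0 : Ftot n k) g = 0 := by
  unfold biext; simp

lemma biext_zero_right (b : Cell n → Cell n → Ftot n k) (f : Ftot n k) :
    biext k b f (0 : Ftot n k) = 0 := by
  unfold biext; simp

/-- Dispatcher for the `c(de) = e` termwise computation. -/
lemma cde_dispatch {e eb : Cell n} {γ : Fin n →₀ ℕ} (hb : IsBasisCell G e)
    (hD : (e.1.card + e.2.card = 2 ∧ eb = ((∅, ∅) : Cell n) ∧
        γ = ∑ i ∈ e.1 ∪ e.2, Finsupp.single i 1) ∨
      (3 ≤ e.1.card + e.2.card ∧ ∃ i, γ = Finsupp.single i 1 ∧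
        ((i ∈ e.1 ∧ eb = (e.1.erase i, e.2)) ∨ (i ∈ e.2 ∧ eb = (e.1, e.2.erase i)))))
    (hbeb : IsBasisCell G eb) {e₃ : Cell n} {α₃ : Fin n →₀ ℕ}
    (hcm : MvPolynomial.coeff α₃ ((cMono G k eb γ) e₃) ≠ 0) :
    e₃ = e ∧ α₃ = 0 := by
  rcases hD with ⟨hcard, hebe, hγ⟩ | ⟨hcard3, i, hγ, hcase⟩
  · obtain ⟨hc1, hc2⟩ := card_of_two hb hcard
    rw [hebe, hγ] at hcm
    exact cde_base hb hc1 hc2 hcm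
  · rcases hcase with ⟨hiu, hebe⟩ | ⟨hiu, hebe⟩
    · have hτe : e.2.Nonempty := basis_pos' hb ⟨i, hiu⟩
      rw [hebe, hγ] at hcm
      exact cde_sigma hb hτe hiu hcm
    · have hτe : e.2.Nonempty := ⟨i, hiu⟩
      have hσe : e.1.Nonempty := (basis_pos hb hτe).1
      rw [hebe] at hbeb
      rw [hebe, hγ] at hcm
      exact cde_tau hb hτe hσe hiu hbeb hcm

lemma termUnit_left (N : ℕ) : ∀ {e e₃ : Cell n} {α₃ : Fin n →₀ ℕ}, IsBasisCell G e →
    MvPolynomial.coeff α₃ ((bstar G k N ((∅, ∅) : Cell n) e) e₃) ≠ 0 →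
    e₃ = e ∧ α₃ = 0 := by
  induction N with
  | zero => intro e e₃ α₃ _ h; exact absurd h (by simp [bstar])
  | succ N ih =>
    intro e e₃ α₃ hb h
    by_cases hd : cellDeg ((∅, ∅) : Cell n) + cellDeg e = 0
    · rw [bstar, if_pos hd] at h
      obtain ⟨he3, hα⟩ := single_coeff_ne h
      have : e = ((∅, ∅) : Cell n) := eq_unit_of_cellDeg_zero hb (by omega)
      exact ⟨by rw [he3, this], hα⟩
    · rw [bstar_succ N _ _ hd, Finsupp.add_apply, MvPolynomial.coeff_add] at h
      rcases add_ne' h with h' | h'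
      · rw [Dmap_single, diffCell_unit, biext_zero_left, map_zero] at h'
        simp at h'
      · have h'' := smul_coeff_strip h'
        obtain ⟨e', α', hf, hcm⟩ := Cmap_term h''
        obtain ⟨ea, eb, β, γ, δ, hsum, hfa, hgb, hbb⟩ := biext_term hf
        obtain ⟨hea, hβ⟩ := single_coeff_ne hfa
        rw [Dmap_single] at hgb
        obtain ⟨hbe, hbeb, hD⟩ := diffCell_term hgb
        rw [hea] at hbb
        obtain ⟨he', hδ⟩ := ih hbeb hbb
        rw [← hsum, hβ, hδ, zero_add, add_zero] at hcm
        rw [he'] at hcm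
        exact cde_dispatch hbe hD hbeb hcm

lemma termUnit_right (N : ℕ) : ∀ {e e₃ : Cell n} {α₃ : Fin n →₀ ℕ}, IsBasisCell G e →
    MvPolynomial.coeff α₃ ((bstar G k N e ((∅, ∅) : Cell n)) e₃) ≠ 0 →
    e₃ = e ∧ α₃ = 0 := by
  induction N with
  | zero => intro e e₃ α₃ _ h; exact absurd h (by simp [bstar])
  | succ N ih =>
    intro e e₃ α₃ hb h
    by_cases hd : cellDeg e + cellDeg ((∅, ∅) : Cell n) = 0
    · rw [bstar, if_pos hd] at h
      obtain ⟨he3, hα⟩ := single_coeff_ne h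
      have : e = ((∅, ∅) : Cell n) := eq_unit_of_cellDeg_zero hb (by omega)
      exact ⟨by rw [he3, this], hα⟩
    · rw [bstar_succ N _ _ hd, Finsupp.add_apply, MvPolynomial.coeff_add] at h
      rcases add_ne' h with h' | h'
      · obtain ⟨e', α', hf, hcm⟩ := Cmap_term h'
        obtain ⟨ea, eb, β, γ, δ, hsum, hfa, hgb, hbb⟩ := biext_term hf
        rw [Dmap_single] at hfa
        obtain ⟨hbe, hbea, hD⟩ := diffCell_term hfa
        obtain ⟨heb, hγ⟩ := single_coeff_ne hgb
        rw [heb] at hbb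
        obtain ⟨he', hδ⟩ := ih hbea hbb
        rw [← hsum, hγ, hδ, add_zero, add_zero] at hcm
        rw [he'] at hcm
        exact cde_dispatch hbe hD hbea hcm
      · have h'' := smul_coeff_strip h'
        obtain ⟨e', α', hf, hcm⟩ := Cmap_term h''
        obtain ⟨ea, eb, β, γ, δ, hsum, hfa, hgb, hbb⟩ := biext_term hf
        rw [Dmap_single, diffCell_unit] at hgb
        simp at hgb

end TermUnit
-- Stage 6: the invariant and step lemmas
section Steps

variable {n : ℕ} {G : SimpleGraph (Fin n)} {k : Type} [Field k]

/-- The product-term invariant. -/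
def Inv (G : SimpleGraph (Fin n)) (T : ℕ) (U V : Finset (Fin n)) (e₃ : Cell n)
    (α₃ : Fin n →₀ ℕ) : Prop :=
  IsBasisCell G e₃ ∧ e₃.1.Nonempty ∧ e₃.2.Nonempty ∧
  e₃.2.max = U.max ∧
  T ≤ e₃.2.card ∧
  (∀ i ∈ α₃.support, ∃ j ∈ e₃.2, i ≤ j) ∧
  (e₃.2.card = 1 → (∀ i ∈ α₃.support, ∃ s ∈ e₃.1, s ≤ i) ∧ ∃ s ∈ e₃.1, ∀ v ∈ V, s ≤ v)

lemma max_trans {A B : Finset (Fin n)} (h : A.max = B.max) (hA : A.Nonempty) :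
    ∃ m, m ∈ A ∧ m ∈ B ∧ (∀ v ∈ A, v ≤ m) ∧ (∀ v ∈ B, v ≤ m) := by
  refine ⟨A.max' hA, Finset.max'_mem _ _, ?_, fun v hv => Finset.le_max' _ _ hv, ?_⟩
  · apply Finset.mem_of_max
    rw [← h, Finset.coe_max' hA]
  · intro v hv
    have hvB : (v : WithBot (Fin n)) ≤ B.max := Finset.le_max hv
    rw [← h, ← Finset.coe_max' hA] at hvB
    exact WithBot.coe_le_coe.mp hvB

lemma mem_support_single_add {δ : Fin n →₀ ℕ} {u i : Fin n} :
    i ∈ (Finsupp.single u 1 + δ).support ↔ i = u ∨ i ∈ δ.support := by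
  simp only [Finsupp.mem_support_iff, Finsupp.add_apply, Finsupp.single_apply]
  constructor
  · intro h
    by_cases hiu : i = u
    · exact Or.inl hiu
    · right; intro h0; rw [h0, if_neg (Ne.symm hiu)] at h; simp at h
  · rintro (rfl | h)
    · rw [if_pos rfl]; omega
    · intro h0; exact h (by omega)

lemma stepSigma (E₁ E₂ : Cell n) (hb1 : IsBasisCell G E₁) (h1τ : E₁.2.Nonempty)
    {u : Fin n} (hu : u ∈ E₁.1)
    {e : Cell n} {δ : Fin n →₀ ℕ}
    (hInv : Inv G (E₁.2.card + E₂.2.card - 1) (E₁.2 ∪ E₂.2) ((E₁.1.erase u) ∪ E₂.1) e δ)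
    {e₃ : Cell n} {α₃ : Fin n →₀ ℕ}
    (h : MvPolynomial.coeff α₃ ((cMono G k e (Finsupp.single u 1 + δ)) e₃) ≠ 0) :
    Inv G (E₁.2.card + E₂.2.card - 1) (E₁.2 ∪ E₂.2) (E₁.1 ∪ E₂.1) e₃ α₃ := by
  obtain ⟨hbe, hσe, hτe, hmax, hcard, hS, hC⟩ := hInv
  obtain ⟨_, hb3, hD⟩ := cMono_term hτe h
  obtain ⟨m, hmτ, hmU, hmτle, hmUle⟩ := max_trans hmax hτe
  have hum : u < m := by
    obtain ⟨t₀, ht₀⟩ := h1τ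
    exact lt_of_lt_of_le ((basis_pos hb1 ⟨t₀, ht₀⟩).2.1 u hu t₀ ht₀)
      (hmUle t₀ (Finset.mem_union_left _ ht₀))
  have hC1 : C1set e.2 (Finsupp.single u 1 + δ) = ∅ := by
    rw [Finset.eq_empty_iff_forall_notMem]
    intro i hi
    rw [mem_C1] at hi
    rcases mem_support_single_add.mp hi.1 with rfl | hiδ
    · exact absurd (hi.2 m hmτ) (not_lt.mpr (le_of_lt hum))
    · obtain ⟨j, hj, hij⟩ := hS i hiδ
      exact absurd (hi.2 j hj) (not_lt.mpr hij)
  rcases hD with ⟨m1, hm1, _⟩ | ⟨t, m1, m3, _, hm1, _⟩ | ⟨t, m2, ht, _, hm2, _, he3, hα⟩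
  · rw [hC1] at hm1; simp at hm1
  · rw [hC1] at hm1; simp at hm1
  · rw [mem_C2] at hm2
    have hc1 : e.2.card = 1 := by rw [ht]; simp
    have hm2u : m2 = u := by
      rcases mem_support_single_add.mp hm2.1 with h' | hiδ
      · exact h'
      · obtain ⟨s, hs, hsle⟩ := (hC hc1).1 m2 hiδ
        exact absurd (hm2.2.1 s hs) (not_lt.mpr hsle)
    subst hm2u
    obtain ⟨hCs, s0, hs0, hs0le⟩ := hC hc1
    have hα3 : α₃ = δ := by rw [hα, add_tsub_cancel_left]
    refine ⟨hb3, ?_, ?_, ?_, ?_, ?_, ?_⟩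
    · rw [he3]; exact ⟨m2, Finset.mem_insert_self m2 _⟩
    · rw [he3]; exact hτe
    · rw [he3]; exact hmax
    · rw [he3]; exact hcard
    · rw [he3, hα3]
      intro i hi
      obtain ⟨j, hj, hij⟩ := hS i hi
      exact ⟨j, hj, hij⟩
    · rw [he3, hα3]
      intro _
      refine ⟨fun i hi => ?_, ?_⟩
      · obtain ⟨s, hs, hsle⟩ := hCs i hi
        exact ⟨s, Finset.mem_insert_of_mem hs, hsle⟩
      · by_cases hcase : s0 ≤ m2
        · refine ⟨s0, Finset.mem_insert_of_mem hs0, fun v hv => ?_⟩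
          rcases Finset.mem_union.mp hv with hv1 | hv2
          · by_cases hvu : v = m2
            · rw [hvu]; exact hcase
            · exact hs0le v (Finset.mem_union_left _ (Finset.mem_erase.mpr ⟨hvu, hv1⟩))
          · exact hs0le v (Finset.mem_union_right _ hv2)
        · push_neg at hcase
          refine ⟨m2, Finset.mem_insert_self m2 _, fun v hv => ?_⟩
          rcases Finset.mem_union.mp hv with hv1 | hv2
          · by_cases hvu : v = m2
            · rw [hvu]
            · exact le_trans (le_of_lt hcase)
                (hs0le v (Finset.mem_union_left _ (Finset.mem_erase.mpr ⟨hvu, hv1⟩)))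
          · exact le_trans (le_of_lt hcase) (hs0le v (Finset.mem_union_right _ hv2))

lemma stepTau (E₁ E₂ : Cell n) (hb1 : IsBasisCell G E₁) (h1σ : E₁.1.Nonempty)
    {u : Fin n} (hu : u ∈ E₁.2) (h2τc : 1 ≤ E₂.2.card)
    {e : Cell n} {δ : Fin n →₀ ℕ}
    (hInv : Inv G ((E₁.2.erase u).card + E₂.2.card - 1) ((E₁.2.erase u) ∪ E₂.2)
      (E₁.1 ∪ E₂.1) e δ)
    {e₃ : Cell n} {α₃ : Fin n →₀ ℕ}
    (h : MvPolynomial.coeff α₃ ((cMono G k e (Finsupp.single u 1 + δ)) e₃) ≠ 0) :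
    Inv G (E₁.2.card + E₂.2.card - 1) (E₁.2 ∪ E₂.2) (E₁.1 ∪ E₂.1) e₃ α₃ := by
  obtain ⟨hbe, hσe, hτe, hmax, hcard, hS, hC⟩ := hInv
  obtain ⟨_, hb3, hD⟩ := cMono_term hτe h
  obtain ⟨w, hw⟩ := h1σ
  have hwu : w < u := (basis_pos hb1 ⟨u, hu⟩).2.1 w hw u hu
  have hno23 : ∀ m', e.2.card = 1 → m' ∈ (Finsupp.single u 1 + δ).support →
      (∀ s ∈ e.1, m' < s) → False := by
    intro m' hc1 hm' hlt
    obtain ⟨hCs, s0, hs0, hs0le⟩ := hC hc1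
    rcases mem_support_single_add.mp hm' with rfl | hiδ
    · have h1 : s0 ≤ w := hs0le w (Finset.mem_union_left _ hw)
      exact absurd (hlt s0 hs0) (not_lt.mpr (le_of_lt (lt_of_le_of_lt h1 hwu)))
    · obtain ⟨s, hs, hsle⟩ := hCs m' hiδ
      exact absurd (hlt s hs) (not_lt.mpr hsle)
  rcases hD with ⟨m1, hm1, _, he3, hα⟩ | ⟨t, m1, m3, ht, _, _, hm3, _⟩ |
    ⟨t, m2, ht, _, hm2, _⟩
  · rw [mem_C1] at hm1
    have hm1u : m1 = u := by
      rcases mem_support_single_add.mp hm1.1 with h' | hiδ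
      · exact h'
      · obtain ⟨j, hj, hij⟩ := hS m1 hiδ
        exact absurd (hm1.2 j hj) (not_lt.mpr hij)
    subst hm1u
    have hαδ : α₃ = δ := by rw [hα, add_tsub_cancel_left]
    have hnotin : m1 ∉ e.2 := fun hmem => absurd (hm1.2 m1 hmem) (lt_irrefl m1)
    have hcins : (insert m1 e.2).card = e.2.card + 1 := Finset.card_insert_of_notMem hnotin
    obtain ⟨m, hmτ, hmU, hmτle, hmUle⟩ := max_trans hmax hτe
    have hmu : m < m1 := hm1.2 m hmτ
    refine ⟨hb3, ?_, ?_, ?_, ?_, ?_, ?_⟩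
    · rw [he3]; exact hσe
    · rw [he3]; exact ⟨m1, Finset.mem_insert_self _ _⟩
    · rw [he3]
      have hL : (insert m1 e.2).max = (m1 : WithBot (Fin n)) := by
        apply max_eq_of (Finset.mem_insert_self m1 e.2)
        intro v hv
        rcases Finset.mem_insert.mp hv with rfl | hv2
        · exact le_refl _
        · exact le_of_lt (hm1.2 v hv2)
      have hR : (E₁.2 ∪ E₂.2).max = (m1 : WithBot (Fin n)) := by
        apply max_eq_of (Finset.mem_union_left E₂.2 hu)
        intro v hv
        rcases Finset.mem_union.mp hv with hv1 | hv2
        · by_cases hvu : v = m1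
          · rw [hvu]
          · exact le_of_lt (lt_of_le_of_lt
              (hmUle v (Finset.mem_union_left _ (Finset.mem_erase.mpr ⟨hvu, hv1⟩))) hmu)
        · exact le_of_lt (lt_of_le_of_lt (hmUle v (Finset.mem_union_right _ hv2)) hmu)
      rw [hL, hR]
    · rw [he3, hcins]
      have hce : (E₁.2.erase m1).card = E₁.2.card - 1 := Finset.card_erase_of_mem hu
      have h1c : 1 ≤ E₁.2.card := Finset.card_pos.mpr ⟨m1, hu⟩
      omega
    · rw [he3, hαδ]
      intro i hi
      obtain ⟨j, hj, hij⟩ := hS i hi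
      exact ⟨j, Finset.mem_insert_of_mem hj, hij⟩
    · rw [he3, hcins]
      intro hcc
      exfalso
      have := Finset.card_pos.mpr hτe
      omega
  · rw [mem_C3] at hm3
    exact (hno23 m3 (by rw [ht]; simp) hm3.1 hm3.2.1).elim
  · rw [mem_C2] at hm2
    exact (hno23 m2 (by rw [ht]; simp) hm2.1 hm2.2.1).elim

lemma stepBase (E₁ E₂ : Cell n) (hb1 : IsBasisCell G E₁) (hb2 : IsBasisCell G E₂)
    {s t : Fin n} (h1 : E₁.1 = {s}) (h2 : E₁.2 = {t})
    (h2σ : E₂.1.Nonempty) (h2τ : E₂.2.Nonempty)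
    (hHT : ∀ ⦃i j l : Fin n⦄, G.Adj i j → i < j → j ≤ l → G.Adj i l)
    {e₃ : Cell n} {α₃ : Fin n →₀ ℕ}
    (h : MvPolynomial.coeff α₃
      ((cMono G k E₂ (Finsupp.single s 1 + Finsupp.single t 1)) e₃) ≠ 0) :
    Inv G (E₁.2.card + E₂.2.card - 1) (E₁.2 ∪ E₂.2) (E₁.1 ∪ E₂.1) e₃ α₃ := by
  have hsm : s ∈ E₁.1 := by rw [h1]; exact Finset.mem_singleton_self s
  have htm : t ∈ E₁.2 := by rw [h2]; exact Finset.mem_singleton_self t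
  have h1τ : E₁.2.Nonempty := ⟨t, htm⟩
  have hst : s < t := (basis_pos hb1 h1τ).2.1 s hsm t htm
  have hadj : G.Adj s t := (basis_pos hb1 h1τ).2.2 s hsm t htm
    (fun j' hj' => by rw [h2, Finset.mem_singleton] at hj'; rw [hj'])
  have horder₂ := (basis_pos hb2 h2τ).2.1
  have hsupp : ∀ i : Fin n,
      i ∈ (Finsupp.single s 1 + Finsupp.single t 1 : Fin n →₀ ℕ).support →
        i = s ∨ i = t := by
    intro i hi
    rcases mem_support_single_add.mp hi with h' | h'
    · exact Or.inl h'
    · exact Or.inr (supp_single_sub h')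
  have hsmem : s ∈ (Finsupp.single s 1 + Finsupp.single t 1 : Fin n →₀ ℕ).support :=
    mem_support_single_add.mpr (Or.inl rfl)
  have htmem : t ∈ (Finsupp.single s 1 + Finsupp.single t 1 : Fin n →₀ ℕ).support := by
    apply mem_support_single_add.mpr
    right
    rw [Finsupp.support_single_ne_zero t one_ne_zero]
    exact Finset.mem_singleton_self t
  have hE1c : E₁.2.card = 1 := by rw [h2]; simp
  obtain ⟨_, hb3, hD⟩ := cMono_term h2τ h
  -- helper: if C1set is nonempty with max m1, then m1 = t and all of E₂.2 is below t
  have hm1t : ∀ m1, m1 ∈ C1set E₂.2 (Finsupp.single s 1 + Finsupp.single t 1) →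
      (∀ x ∈ C1set E₂.2 (Finsupp.single s 1 + Finsupp.single t 1), x ≤ m1) →
      m1 = t ∧ ∀ j ∈ E₂.2, j < t := by
    intro m1 hm1 hm1le
    rw [mem_C1] at hm1
    rcases hsupp m1 hm1.1 with h' | h'
    · rw [h'] at hm1 hm1le
      have htC : t ∈ C1set E₂.2 (Finsupp.single s 1 + Finsupp.single t 1) :=
        mem_C1.mpr ⟨htmem, fun j hj => lt_trans (hm1.2 j hj) hst⟩
      exact absurd (hm1le t htC) (not_le.mpr hst)
    · rw [h'] at hm1
      exact ⟨h', hm1.2⟩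
  rcases hD with ⟨m1, hm1, hm1le, he3, hα⟩ |
    ⟨t₂, m1, m3, ht₂, hm1, hm1le, hm3, hm3le, he3, hα⟩ |
    ⟨t₂, m2, ht₂, hC1e, hm2, hm2le, he3, hα⟩
  · -- D1 branch
    obtain ⟨hm1e, hbelow⟩ := hm1t m1 hm1 hm1le
    subst hm1e
    have hnotin : m1 ∉ E₂.2 := fun hmem => absurd (hbelow m1 hmem) (lt_irrefl _)
    have hcins : (insert m1 E₂.2).card = E₂.2.card + 1 := Finset.card_insert_of_notMem hnotin
    have hαs : α₃ = Finsupp.single s 1 := by rw [hα, add_tsub_cancel_right]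
    refine ⟨hb3, ?_, ?_, ?_, ?_, ?_, ?_⟩
    · rw [he3]; exact h2σ
    · rw [he3]; exact ⟨m1, Finset.mem_insert_self _ _⟩
    · rw [he3]
      have hL : (insert m1 E₂.2).max = (m1 : WithBot (Fin n)) := by
        apply max_eq_of (Finset.mem_insert_self m1 E₂.2)
        intro v hv
        rcases Finset.mem_insert.mp hv with rfl | hv2
        · exact le_refl _
        · exact le_of_lt (hbelow v hv2)
      have hR : (E₁.2 ∪ E₂.2).max = (m1 : WithBot (Fin n)) := by
        apply max_eq_of (Finset.mem_union_left E₂.2 htm)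
        intro v hv
        rcases Finset.mem_union.mp hv with hv1 | hv2
        · rw [h2, Finset.mem_singleton] at hv1; rw [hv1]
        · exact le_of_lt (hbelow v hv2)
      rw [hL, hR]
    · rw [he3, hcins, hE1c]; omega
    · rw [he3, hαs]
      intro i hi
      have : i = s := supp_single_sub hi
      exact ⟨m1, Finset.mem_insert_self _ _, by rw [this]; exact le_of_lt hst⟩
    · rw [he3, hcins]
      intro hcc
      exfalso
      have := Finset.card_pos.mpr h2τ
      omega
  · -- D2 branch
    obtain ⟨hm1e, hbelow⟩ := hm1t m1 hm1 hm1le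
    subst hm1e
    rw [mem_C3] at hm3
    have hm3s : m3 = s := by
      rcases hsupp m3 hm3.1 with h' | h'
      · exact h'
      · exfalso
        have := (hm3.2.2 m1 htmem (fun m' hm' => by
          rcases hsupp m' hm' with rfl | rfl
          · exact le_of_lt hst
          · exact le_refl _)).1
        rw [h'] at this
        exact absurd this (lt_irrefl _)
    subst hm3s
    -- now m3 has been replaced by s?  (hm3s : m3 = s eliminates s, so s is gone; names kept)
    have ht₂t := hbelow t₂ (by rw [ht₂]; exact Finset.mem_singleton_self _)
    have hαt₂ : α₃ = Finsupp.single t₂ 1 := by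
      rw [hα]
      have hre : (Finsupp.single m3 1 + Finsupp.single m1 1 + Finsupp.single t₂ 1 :
          Fin n →₀ ℕ) = (Finsupp.single t₂ 1 + Finsupp.single m3 1) + Finsupp.single m1 1 := by
        abel
      rw [hre, add_tsub_cancel_right, add_tsub_cancel_right]
    have hE2c : E₂.2.card = 1 := by rw [ht₂]; simp
    obtain ⟨w, hw⟩ := h2σ
    have hsw := hm3.2.1 w hw
    have hwt₂ : w < t₂ := horder₂ w hw t₂ (by rw [ht₂]; exact Finset.mem_singleton_self _)
    refine ⟨hb3, ?_, ?_, ?_, ?_, ?_, ?_⟩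
    · rw [he3]; exact ⟨m3, Finset.mem_insert_self _ _⟩
    · rw [he3]; exact ⟨m1, Finset.mem_singleton_self _⟩
    · rw [he3]
      have hL : ({m1} : Finset (Fin n)).max = (m1 : WithBot (Fin n)) := by
        apply max_eq_of (Finset.mem_singleton_self m1)
        intro v hv
        rw [Finset.mem_singleton.mp hv]
      have hR : (E₁.2 ∪ E₂.2).max = (m1 : WithBot (Fin n)) := by
        apply max_eq_of (Finset.mem_union_left E₂.2 htm)
        intro v hv
        rcases Finset.mem_union.mp hv with hv1 | hv2
        · rw [h2, Finset.mem_singleton] at hv1; rw [hv1]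
        · exact le_of_lt (hbelow v hv2)
      rw [hL, hR]
    · rw [he3, hE1c, hE2c]; simp
    · rw [he3, hαt₂]
      intro i hi
      have : i = t₂ := supp_single_sub hi
      exact ⟨m1, Finset.mem_singleton_self _, by rw [this]; exact le_of_lt ht₂t⟩
    · rw [he3, hαt₂]
      intro _
      refine ⟨fun i hi => ?_, ?_⟩
      · have : i = t₂ := supp_single_sub hi
        exact ⟨m3, Finset.mem_insert_self _ _,
          by rw [this]; exact le_of_lt (lt_trans hsw hwt₂)⟩
      · refine ⟨m3, Finset.mem_insert_self _ _, fun v hv => ?_⟩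
        rcases Finset.mem_union.mp hv with hv1 | hv2
        · rw [h1, Finset.mem_singleton] at hv1; rw [hv1]
        · exact le_of_lt (hm3.2.1 v hv2)
  · -- D3 branch
    rw [mem_C2] at hm2
    have htt₂ : t ≤ t₂ := by
      by_contra hcon
      push_neg at hcon
      have : t ∈ C1set E₂.2 (Finsupp.single s 1 + Finsupp.single t 1) :=
        mem_C1.mpr ⟨htmem, fun j hj => by
          rw [ht₂, Finset.mem_singleton] at hj; rw [hj]; exact hcon⟩
      rw [hC1e] at this; simp at this
    have ht₂mem : t₂ ∈ E₂.2 := by rw [ht₂]; exact Finset.mem_singleton_self _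
    have hm2s : m2 = s := by
      rcases hsupp m2 hm2.1 with h' | h'
      · exact h'
      · rw [h'] at hm2 hm2le
        exfalso
        have hsC2 : s ∈ C2set G E₂.1 E₂.2 (Finsupp.single s 1 + Finsupp.single t 1) := by
          rw [mem_C2]
          refine ⟨hsmem, fun s' hs' => lt_trans hst (hm2.2.1 s' hs'), fun j hj hjmin => ?_⟩
          have : j = t₂ := by rw [ht₂, Finset.mem_singleton] at hj; exact hj
          subst this
          exact hHT hadj hst htt₂
        exact absurd (hm2le s hsC2) (not_le.mpr hst)
      
    subst hm2s
    have hαt : α₃ = Finsupp.single t 1 := by rw [hα, add_tsub_cancel_left]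
    have hE2c : E₂.2.card = 1 := by rw [ht₂]; simp
    refine ⟨hb3, ?_, ?_, ?_, ?_, ?_, ?_⟩
    · rw [he3]; exact ⟨m2, Finset.mem_insert_self _ _⟩
    · rw [he3]; exact h2τ
    · rw [he3]
      have hL : E₂.2.max = (t₂ : WithBot (Fin n)) := by
        apply max_eq_of ht₂mem
        intro v hv
        rw [ht₂, Finset.mem_singleton] at hv; rw [hv]
      have hR : (E₁.2 ∪ E₂.2).max = (t₂ : WithBot (Fin n)) := by
        apply max_eq_of (Finset.mem_union_right E₁.2 ht₂mem)
        intro v hv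
        rcases Finset.mem_union.mp hv with hv1 | hv2
        · rw [h2, Finset.mem_singleton] at hv1; rw [hv1]; exact htt₂
        · rw [ht₂, Finset.mem_singleton] at hv2; rw [hv2]
      rw [hL, hR]
    · rw [he3, hE1c, hE2c]
    · rw [he3, hαt]
      intro i hi
      have : i = t := supp_single_sub hi
      exact ⟨t₂, ht₂mem, by rw [this]; exact htt₂⟩
    · rw [he3, hαt]
      intro _
      refine ⟨fun i hi => ?_, ?_⟩
      · have : i = t := supp_single_sub hi
        exact ⟨m2, Finset.mem_insert_self _ _, by rw [this]; exact le_of_lt hst⟩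
      · refine ⟨m2, Finset.mem_insert_self _ _, fun v hv => ?_⟩
        rcases Finset.mem_union.mp hv with hv1 | hv2
        · rw [h1, Finset.mem_singleton] at hv1; rw [hv1]
        · exact le_of_lt (hm2.2.1 v hv2)

end Steps
-- Stage 7: main induction and final assembly
section Main

variable {n : ℕ} {G : SimpleGraph (Fin n)} {k : Type} [Field k]

lemma chi_pair {s t : Fin n} (hst : s < t) {A B : Finset (Fin n)} (hA : A = {s})
    (hB : B = {t}) :
    (∑ i ∈ A ∪ B, Finsupp.single i 1 : Fin n →₀ ℕ) =
      Finsupp.single s 1 + Finsupp.single t 1 := by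
  rw [hA, hB, Finset.sum_union (Finset.disjoint_singleton.mpr hst.ne),
    Finset.sum_singleton, Finset.sum_singleton]

lemma mainInv (hHT : ∀ ⦃i j l : Fin n⦄, G.Adj i j → i < j → j ≤ l → G.Adj i l) (N : ℕ) :
    ∀ {e₁ e₂ e₃ : Cell n} {α₃ : Fin n →₀ ℕ},
      IsBasisCell G e₁ → IsBasisCell G e₂ → e₁.2.Nonempty → e₂.2.Nonempty →
      MvPolynomial.coeff α₃ ((bstar G k N e₁ e₂) e₃) ≠ 0 →
      Inv G (e₁.2.card + e₂.2.card - 1) (e₁.2 ∪ e₂.2) (e₁.1 ∪ e₂.1) e₃ α₃ := by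
  induction N with
  | zero => intro e₁ e₂ e₃ α₃ _ _ _ _ h; exact absurd h (by simp [bstar])
  | succ N ih =>
    intro e₁ e₂ e₃ α₃ hb1 hb2 h1τ h2τ h
    have h1σ : e₁.1.Nonempty := (basis_pos hb1 h1τ).1
    have h2σ : e₂.1.Nonempty := (basis_pos hb2 h2τ).1
    have hd : ¬(cellDeg e₁ + cellDeg e₂ = 0) := by
      have := cellDeg_card h1σ h1τ; omega
    rw [bstar_succ N _ _ hd, Finsupp.add_apply, MvPolynomial.coeff_add] at h
    rcases add_ne' h with h' | h'
    · obtain ⟨e', α', hf, hcm⟩ := Cmap_term h'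
      obtain ⟨ea, eb, β, γ, δ, hsum, hfa, hgb, hbb⟩ := biext_term hf
      rw [Dmap_single] at hfa
      obtain ⟨_, hbea, hD⟩ := diffCell_term hfa
      obtain ⟨heb, hγ⟩ := single_coeff_ne hgb
      rw [heb] at hbb
      rcases hD with ⟨hcard, heaunit, hβ⟩ | ⟨hcard3, u, hβ, hcase⟩
      · rw [heaunit] at hbb
        obtain ⟨he', hδ0⟩ := termUnit_left N hb2 hbb
        obtain ⟨hc1, hc2⟩ := card_of_two hb1 hcard
        obtain ⟨s, hs⟩ := Finset.card_eq_one.mp hc1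
        obtain ⟨t, ht⟩ := Finset.card_eq_one.mp hc2
        have hst : s < t := (basis_pos hb1 h1τ).2.1 s (by rw [hs]; simp) t (by rw [ht]; simp)
        rw [← hsum, hγ, hδ0, add_zero, add_zero, hβ, chi_pair hst hs ht, he'] at hcm
        exact stepBase e₁ e₂ hb1 hb2 hs ht h2σ h2τ hHT hcm
      · rcases hcase with ⟨hu, hea⟩ | ⟨hu, hea⟩
        · rw [hea] at hbea hbb
          have hIH := ih hbea hb2 h1τ h2τ hbb
          rw [← hsum, hγ, hβ, add_zero] at hcm
          exact stepSigma e₁ e₂ hb1 h1τ hu hIH hcm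
        · rw [hea] at hbea hbb
          have hτc : (e₁.2.erase u).Nonempty := basis_pos' hbea h1σ
          have hIH := ih hbea hb2 hτc h2τ hbb
          rw [← hsum, hγ, hβ, add_zero] at hcm
          exact stepTau e₁ e₂ hb1 h1σ hu (Finset.card_pos.mpr h2τ) hIH hcm
    · have h'' := smul_coeff_strip h'
      obtain ⟨e', α', hf, hcm⟩ := Cmap_term h''
      obtain ⟨ea, eb, β, γ, δ, hsum, hfa, hgb, hbb⟩ := biext_term hf
      obtain ⟨hea, hβ0⟩ := single_coeff_ne hfa
      rw [Dmap_single] at hgb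
      obtain ⟨_, hbeb, hD⟩ := diffCell_term hgb
      rw [hea] at hbb
      rcases hD with ⟨hcard, hebunit, hγ⟩ | ⟨hcard3, u, hγ, hcase⟩
      · rw [hebunit] at hbb
        obtain ⟨he', hδ0⟩ := termUnit_right N hb1 hbb
        obtain ⟨hc1, hc2⟩ := card_of_two hb2 hcard
        obtain ⟨s, hs⟩ := Finset.card_eq_one.mp hc1
        obtain ⟨t, ht⟩ := Finset.card_eq_one.mp hc2
        have hst : s < t := (basis_pos hb2 h2τ).2.1 s (by rw [hs]; simp) t (by rw [ht]; simp)
        rw [← hsum, hβ0, hδ0, zero_add, add_zero, hγ, chi_pair hst hs ht, he'] at hcm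
        have hres := stepBase e₂ e₁ hb2 hb1 hs ht h1σ h1τ hHT hcm
        rwa [Finset.union_comm e₂.2 e₁.2, Finset.union_comm e₂.1 e₁.1,
          Nat.add_comm e₂.2.card e₁.2.card] at hres
      · rcases hcase with ⟨hu, heb2⟩ | ⟨hu, heb2⟩
        · rw [heb2] at hbeb hbb
          have hIH := ih hb1 hbeb h1τ h2τ hbb
          have hIH' : Inv G (e₁.2.card + e₂.2.card - 1) (e₁.2 ∪ e₂.2)
              (e₁.1 ∪ e₂.1.erase u) e' δ := hIH
          rw [Nat.add_comm e₁.2.card e₂.2.card, Finset.union_comm e₁.2 e₂.2,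
            Finset.union_comm e₁.1 (e₂.1.erase u)] at hIH'
          rw [← hsum, hβ0, hγ, zero_add] at hcm
          have hres := stepSigma e₂ e₁ hb2 h2τ hu hIH' hcm
          rwa [Finset.union_comm e₂.2 e₁.2, Finset.union_comm e₂.1 e₁.1,
            Nat.add_comm e₂.2.card e₁.2.card] at hres
        · rw [heb2] at hbeb hbb
          have hτc : (e₂.2.erase u).Nonempty := basis_pos' hbeb h2σ
          have hIH := ih hb1 hbeb h1τ hτc hbb
          have hIH' : Inv G (e₁.2.card + (e₂.2.erase u).card - 1)
              (e₁.2 ∪ e₂.2.erase u) (e₁.1 ∪ e₂.1) e' δ := hIH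
          rw [Nat.add_comm e₁.2.card (e₂.2.erase u).card,
            Finset.union_comm e₁.2 (e₂.2.erase u), Finset.union_comm e₁.1 e₂.1] at hIH'
          rw [← hsum, hβ0, hγ, zero_add] at hcm
          have hres := stepTau e₂ e₁ hb2 h2σ hu (Finset.card_pos.mpr h1τ) hIH' hcm
          rwa [Finset.union_comm e₂.2 e₁.2, Finset.union_comm e₂.1 e₁.1,
            Nat.add_comm e₂.2.card e₁.2.card] at hres

lemma cigraph_trans {a b : Fin n → ℝ} (hab : ∀ i, a i ≤ b i)
    (hmono : ∀ i j : Fin n, i < j → a i ≤ a j) :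
    ∀ ⦃i j l : Fin n⦄, (cigraph n a b).Adj i j → i < j → j ≤ l → (cigraph n a b).Adj i l := by
  intro i j l hadj hij hjl
  have hbij : b i < a j := by
    by_contra hcon
    push_neg at hcon
    have h1 : a j ∈ Set.Icc (a i) (b i) := ⟨hmono i j hij, hcon⟩
    have h2 : a j ∈ Set.Icc (a j) (b j) := ⟨le_refl _, hab j⟩
    exact Set.disjoint_left.mp hadj.2 h1 h2
  have hal : a j ≤ a l := by
    rcases eq_or_lt_of_le hjl with rfl | hlt
    · exact le_refl _
    · exact hmono j l hlt
  constructor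
  · exact ne_of_lt (lt_of_lt_of_le hij hjl)
  · rw [Set.disjoint_left]
    intro x hx1 hx2
    exact absurd hx2.1 (not_le.mpr (lt_of_le_of_lt hx1.2 (lt_of_lt_of_le hbij hal)))

end Main
theorem stmt13 (n : ℕ) (hn : 1 ≤ n) (a b : Fin n → ℝ)
    (hab : ∀ i, a i ≤ b i) (hmono : ∀ i j : Fin n, i < j → a i ≤ a j)
    (k : Type) [Field k]
    (p q : ℕ) (hp : 1 ≤ p) (hq : 1 ≤ q) (e₁ e₂ : Cell n)
    (h1 : InB (cigraph n a b) p e₁) (h2 : InB (cigraph n a b) q e₂)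
    (e₃ : Cell n) (h3 : IsBasisCell (cigraph n a b) e₃)
    (hne : pstar (cigraph n a b) k (Finsupp.single e₁ 1) (Finsupp.single e₂ 1) e₃ ≠ 0) :
    e₃.2.max = (e₁.2 ∪ e₂.2).max ∧ e₁.2.card + e₂.2.card - 1 ≤ e₃.2.card := by
  have hb1 := h1.1
  have hb2 := h2.1
  have hτ1 : e₁.2.Nonempty := by
    rcases hb1 with hcase | hcase
    · exfalso
      have := h1.2
      rw [hcase] at this
      simp [cellDeg] at this
      omega
    · exact hcase.2.1
  have hτ2 : e₂.2.Nonempty := by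
    rcases hb2 with hcase | hcase
    · exfalso
      have := h2.2
      rw [hcase] at this
      simp [cellDeg] at this
      omega
    · exact hcase.2.1
  rw [pstar_single] at hne
  obtain ⟨α₃, hcoeff⟩ := MvPolynomial.ne_zero_iff.mp hne
  have hInv := mainInv (cigraph_trans hab hmono) (4 * n + 4) h1.1 h2.1 hτ1 hτ2 hcoeff
  exact ⟨hInv.2.2.2.1, hInv.2.2.2.2.1⟩

end EdgeRes
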